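/- There exists a constant C > 0 such that for every real r ≥ 2, the logarithmic derivative of the Gamma function satisfies ‖(Γ'/Γ)(1/2 + ir) − log r‖ ≤ C, where Γ'/Γ denotes logDeriv Γ, i.e., the derivative of Γ divided by Γ, evaluated at 1/2 + ir, and log r is viewed as a complex number. -/

import Mathlib

open Complex Filter Topology
open MeasureTheory Set


namespace DigammaAux

noncomputable def cfun (n : ℕ) (t : ℝ) : ℝ :=
  Set.indicator (Set.Ioc 0 (n:ℝ)) (fun t => (1 - t/n)^n) t

lemma cfun_nonneg (n : ℕ) (t : ℝ) : 0 ≤ cfun n t := by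
  refine Set.indicator_nonneg (fun x hx => ?_) t
  have hn : (0:ℝ) < n := lt_of_lt_of_le hx.1 hx.2
  have : x / n ≤ 1 := (div_le_one hn).2 hx.2
  exact pow_nonneg (by linarith) n

lemma cfun_le_exp {n : ℕ} {t : ℝ} (ht : 0 < t) : cfun n t ≤ Real.exp (-t) := by
  unfold cfun
  rcases le_or_gt t n with h | h
  · rw [Set.indicator_of_mem (show t ∈ Set.Ioc 0 (n:ℝ) from ⟨ht, h⟩)]
    exact Real.one_sub_div_pow_le_exp_neg h
  · rw [Set.indicator_of_notMem (fun hm => absurd hm.2 (not_le.2 h))]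
    exact (Real.exp_pos (-t)).le

end DigammaAux

namespace DigammaAux
open Complex

lemma cfun_eq_indicator (n : ℕ) (z : ℂ) :
    (fun t : ℝ => (cfun n t : ℂ) * (t:ℂ) ^ (z - 1)) =
      Set.indicator (Set.Ioc 0 (n:ℝ))
        (fun t : ℝ => ((((1 - t/n)^n : ℝ)) : ℂ) * (t:ℂ) ^ (z - 1)) := by
  funext t
  by_cases ht : t ∈ Set.Ioc (0:ℝ) (n:ℝ)
  · rw [Set.indicator_of_mem ht]
    unfold cfun
    rw [Set.indicator_of_mem ht]
  · rw [Set.indicator_of_notMem ht]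
    unfold cfun
    rw [Set.indicator_of_notMem ht]
    simp

lemma cfun_integrable {n : ℕ} {z : ℂ} (hz : 0 < z.re) :
    IntegrableOn (fun t : ℝ => (cfun n t : ℂ) * (t:ℂ) ^ (z - 1)) (Set.Ioi 0) := by
  rw [cfun_eq_indicator]
  rw [IntegrableOn, integrable_indicator_iff (measurableSet_Ioc : MeasurableSet (Set.Ioc (0:ℝ) n)), IntegrableOn,
    Measure.restrict_restrict_of_subset Set.Ioc_subset_Ioi_self, ← IntegrableOn,
    ← intervalIntegrable_iff_integrableOn_Ioc_of_le (by positivity : (0 : ℝ) ≤ n)]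
  apply IntervalIntegrable.continuousOn_mul
  · refine intervalIntegral.intervalIntegrable_cpow' ?_
    rwa [sub_re, one_re, ← zero_sub, sub_lt_sub_iff_right]
  · apply Continuous.continuousOn
    exact RCLike.continuous_ofReal.comp
      ((continuous_const.sub (continuous_id'.div_const (n : ℝ))).pow n)

lemma GammaSeq_eq_integral {z : ℂ} (hz : 0 < z.re) {n : ℕ} (hn : n ≠ 0) :
    Complex.GammaSeq z n = ∫ t in Set.Ioi (0:ℝ), (cfun n t : ℂ) * (t:ℂ) ^ (z - 1) := by
  rw [Complex.GammaSeq_eq_approx_Gamma_integral hz hn, cfun_eq_indicator,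
    MeasureTheory.integral_indicator (measurableSet_Ioc : MeasurableSet (Set.Ioc (0:ℝ) n)),
    intervalIntegral.integral_of_le (by positivity : (0:ℝ) ≤ n),
    Measure.restrict_restrict_of_subset Set.Ioc_subset_Ioi_self]

end DigammaAux

namespace DigammaAux

noncomputable def dfun (n : ℕ) (t : ℝ) : ℝ := Real.exp (-t) - cfun n t

lemma dfun_nonneg {n : ℕ} {t : ℝ} (ht : 0 < t) : 0 ≤ dfun n t :=
  sub_nonneg.2 (cfun_le_exp ht)

lemma diff_eq {z : ℂ} (hz : 0 < z.re) {n : ℕ} (hn : n ≠ 0) :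
    Complex.Gamma z - Complex.GammaSeq z n
      = ∫ t in Set.Ioi (0:ℝ), ((dfun n t : ℝ) : ℂ) * (t:ℂ) ^ (z - 1) := by
  rw [Complex.Gamma_eq_integral hz, Complex.GammaIntegral, GammaSeq_eq_integral hz hn,
    ← MeasureTheory.integral_sub (Complex.GammaIntegral_convergent hz) (cfun_integrable hz)]
  congr 1
  funext t
  simp only [dfun, Complex.ofReal_sub]
  ring

lemma norm_integrand {n : ℕ} (z : ℂ) {t : ℝ} (ht : 0 < t) :
    ‖((dfun n t : ℝ) : ℂ) * (t:ℂ) ^ (z - 1)‖ = dfun n t * t ^ (z.re - 1) := by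
  rw [norm_mul, Complex.norm_real, Complex.norm_cpow_eq_rpow_re_of_pos ht, Real.norm_eq_abs,
    _root_.abs_of_nonneg (dfun_nonneg ht)]
  simp

lemma dfun_integrable {n : ℕ} {x : ℝ} (hx : 0 < x) :
    MeasureTheory.IntegrableOn (fun t => dfun n t * t ^ (x - 1)) (Set.Ioi (0:ℝ)) := by
  have hx' : (0:ℝ) < ((x:ℂ)).re := by simpa using hx
  have h := ((Complex.GammaIntegral_convergent hx').sub (cfun_integrable (n := n) hx')).norm
  refine h.congr ?_
  refine (MeasureTheory.ae_restrict_iff' measurableSet_Ioi).2 ?_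
  filter_upwards with t ht
  simp only [Pi.sub_apply]
  have : (Real.exp (-t) : ℂ) * (t:ℂ) ^ ((x:ℂ) - 1) - (cfun n t : ℂ) * (t:ℂ) ^ ((x:ℂ) - 1)
      = ((dfun n t : ℝ) : ℂ) * (t:ℂ) ^ ((x:ℂ) - 1) := by
    simp only [dfun, Complex.ofReal_sub]; ring
  rw [this, norm_integrand _ ht]
  simp

lemma real_integral_le {n : ℕ} (hn : n ≠ 0) {x : ℝ} (hx : 0 < x) :
    (∫ t in Set.Ioi (0:ℝ), dfun n t * t ^ (x - 1))
      ≤ ‖Complex.Gamma (x:ℂ) - Complex.GammaSeq (x:ℂ) n‖ := by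
  have hx' : (0:ℝ) < ((x:ℂ)).re := by simpa using hx
  have hint : MeasureTheory.Integrable (fun t : ℝ => ((dfun n t : ℝ) : ℂ) * (t:ℂ) ^ ((x:ℂ) - 1))
      (MeasureTheory.volume.restrict (Set.Ioi (0:ℝ))) := by
    have h := ((Complex.GammaIntegral_convergent hx').sub (cfun_integrable (n := n) hx'))
    refine h.congr ?_
    refine (MeasureTheory.ae_restrict_iff' measurableSet_Ioi).2 ?_
    filter_upwards with t ht
    simp only [Pi.sub_apply, dfun, Complex.ofReal_sub]; ring
  calc (∫ t in Set.Ioi (0:ℝ), dfun n t * t ^ (x - 1))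
      = ∫ t in Set.Ioi (0:ℝ), (((dfun n t : ℝ) : ℂ) * (t:ℂ) ^ ((x:ℂ) - 1)).re := by
        refine MeasureTheory.setIntegral_congr_fun measurableSet_Ioi (fun t ht => ?_)
        have ht' : (0:ℝ) < t := ht
        have hc : ((x:ℂ) - 1) = ((x - 1 : ℝ) : ℂ) := by push_cast; ring
        rw [hc, ← Complex.ofReal_cpow ht'.le, ← Complex.ofReal_mul]
        simp
    _ = (∫ t in Set.Ioi (0:ℝ), ((dfun n t : ℝ) : ℂ) * (t:ℂ) ^ ((x:ℂ) - 1)).re :=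
        by simpa using _root_.integral_re hint
    _ = (Complex.Gamma (x:ℂ) - Complex.GammaSeq (x:ℂ) n).re := by rw [diff_eq hx' hn]
    _ ≤ ‖Complex.Gamma (x:ℂ) - Complex.GammaSeq (x:ℂ) n‖ := Complex.re_le_norm _

end DigammaAux

namespace DigammaAux

lemma strip_bound {n : ℕ} (hn : n ≠ 0) {s : ℂ} (h1 : 1/4 < s.re) (h2 : s.re < 3/4) :
    ‖Complex.Gamma s - Complex.GammaSeq s n‖ ≤
      ‖Complex.Gamma ((1/4:ℝ):ℂ) - Complex.GammaSeq ((1/4:ℝ):ℂ) n‖ +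
      ‖Complex.Gamma ((3/4:ℝ):ℂ) - Complex.GammaSeq ((3/4:ℝ):ℂ) n‖ := by
  have hs : 0 < s.re := lt_trans (by norm_num) h1
  rw [diff_eq hs hn]
  have h14 : (0:ℝ) < 1/4 := by norm_num
  have h34 : (0:ℝ) < 3/4 := by norm_num
  calc ‖∫ t in Set.Ioi (0:ℝ), ((dfun n t : ℝ) : ℂ) * (t:ℂ) ^ (s - 1)‖
      ≤ ∫ t in Set.Ioi (0:ℝ), ‖((dfun n t : ℝ) : ℂ) * (t:ℂ) ^ (s - 1)‖ :=
        MeasureTheory.norm_integral_le_integral_norm _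
    _ ≤ ∫ t in Set.Ioi (0:ℝ),
          (dfun n t * t ^ ((1/4:ℝ) - 1) + dfun n t * t ^ ((3/4:ℝ) - 1)) := by
        refine MeasureTheory.integral_mono_of_nonneg
          (Filter.Eventually.of_forall (fun t => norm_nonneg _))
          ((dfun_integrable h14).add (dfun_integrable h34)) ?_
        refine (MeasureTheory.ae_restrict_iff' measurableSet_Ioi).2 ?_
        filter_upwards with t ht
        have ht' : (0:ℝ) < t := ht
        rw [norm_integrand _ ht']
        have hd := dfun_nonneg (n := n) ht'
        rcases le_total 1 t with h | h
        · have : t ^ (s.re - 1) ≤ t ^ ((3/4:ℝ) - 1) :=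
            Real.rpow_le_rpow_of_exponent_le h (by linarith)
          nlinarith [Real.rpow_nonneg ht'.le ((1/4:ℝ) - 1), mul_le_mul_of_nonneg_left this hd]
        · have : t ^ (s.re - 1) ≤ t ^ ((1/4:ℝ) - 1) :=
            Real.rpow_le_rpow_of_exponent_ge ht' h (by linarith)
          nlinarith [Real.rpow_nonneg ht'.le ((3/4:ℝ) - 1), mul_le_mul_of_nonneg_left this hd]
    _ = (∫ t in Set.Ioi (0:ℝ), dfun n t * t ^ ((1/4:ℝ) - 1))
        + ∫ t in Set.Ioi (0:ℝ), dfun n t * t ^ ((3/4:ℝ) - 1) :=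
        MeasureTheory.integral_add (dfun_integrable h14) (dfun_integrable h34)
    _ ≤ _ := add_le_add (real_integral_le hn h14) (real_integral_le hn h34)

lemma gammaSeq_unif :
    TendstoUniformlyOn (fun (n : ℕ) (s : ℂ) => Complex.GammaSeq s n) Complex.Gamma
      atTop {s : ℂ | 1/4 < s.re ∧ s.re < 3/4} := by
  rw [Metric.tendstoUniformlyOn_iff]
  intro ε hε
  have hu : Filter.Tendsto (fun n : ℕ =>
      ‖Complex.Gamma ((1/4:ℝ):ℂ) - Complex.GammaSeq ((1/4:ℝ):ℂ) n‖ +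
      ‖Complex.Gamma ((3/4:ℝ):ℂ) - Complex.GammaSeq ((3/4:ℝ):ℂ) n‖) atTop (𝓝 0) := by
    have h1 : Filter.Tendsto (fun n : ℕ =>
        Complex.Gamma ((1/4:ℝ):ℂ) - Complex.GammaSeq ((1/4:ℝ):ℂ) n) atTop (𝓝 0) := by
      have := (tendsto_const_nhds (x := Complex.Gamma ((1/4:ℝ):ℂ)) (f := Filter.atTop (α := ℕ))).sub
        (Complex.GammaSeq_tendsto_Gamma ((1/4:ℝ):ℂ))
      simpa using this
    have h2 : Filter.Tendsto (fun n : ℕ =>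
        Complex.Gamma ((3/4:ℝ):ℂ) - Complex.GammaSeq ((3/4:ℝ):ℂ) n) atTop (𝓝 0) := by
      have := (tendsto_const_nhds (x := Complex.Gamma ((3/4:ℝ):ℂ)) (f := Filter.atTop (α := ℕ))).sub
        (Complex.GammaSeq_tendsto_Gamma ((3/4:ℝ):ℂ))
      simpa using this
    simpa using (h1.norm.add h2.norm)
  filter_upwards [hu.eventually (gt_mem_nhds hε), Filter.eventually_ge_atTop 1] with n h1 h2 s hsmem
  have := strip_bound (n := n) (by omega) hsmem.1 hsmem.2
  rw [dist_eq_norm]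
  exact lt_of_le_of_lt this h1

end DigammaAux

namespace DigammaAux

lemma prod_ne_zero {n : ℕ} {s : ℂ} (hs : 0 < s.re) :
    ∀ j ∈ Finset.range (n+1), s + (j:ℂ) ≠ 0 := by
  intro j _ h
  have h2 : s.re + (j:ℝ) = 0 := by
    have := congrArg Complex.re h
    simpa using this
  have h3 : (0:ℝ) ≤ (j:ℝ) := Nat.cast_nonneg j
  linarith

lemma logDeriv_gammaSeq {n : ℕ} (hn : n ≠ 0) {s : ℂ} (hs : 0 < s.re) :
    logDeriv (fun z => Complex.GammaSeq z n) s
      = (Real.log n : ℂ) - ∑ j ∈ Finset.range (n+1), (s + (j:ℂ))⁻¹ := by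
  have hne : ∀ j ∈ Finset.range (n+1), s + (j:ℂ) ≠ 0 := prod_ne_zero hs
  have hnn : ((n:ℂ)) ≠ 0 := Nat.cast_ne_zero.2 hn
  have hpow : ∀ z : ℂ, (n:ℂ) ^ z ≠ 0 := fun z => by
    simp [Complex.cpow_def, hnn, Complex.exp_ne_zero]
  have hfact : ((n.factorial : ℂ)) ≠ 0 := Nat.cast_ne_zero.2 n.factorial_ne_zero
  have hdf : DifferentiableAt ℂ (fun z : ℂ => (n:ℂ) ^ z * (n.factorial : ℂ)) s := by
    apply DifferentiableAt.mul_const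
    exact (differentiableAt_id.const_cpow (Or.inl hnn))
  have hdg : DifferentiableAt ℂ (fun z : ℂ => ∏ j ∈ Finset.range (n+1), (z + (j:ℂ))) s :=
    DifferentiableAt.fun_finsetProd (fun j _ => differentiableAt_id.add_const _)
  have h1 : logDeriv (fun z => Complex.GammaSeq z n) s
      = logDeriv (fun z : ℂ => (n:ℂ) ^ z * (n.factorial : ℂ)) s
        - logDeriv (fun z : ℂ => ∏ j ∈ Finset.range (n+1), (z + (j:ℂ))) s := by
    rw [show (fun z => Complex.GammaSeq z n) = fun z : ℂ =>
      ((n:ℂ) ^ z * (n.factorial : ℂ)) / (∏ j ∈ Finset.range (n+1), (z + (j:ℂ))) from rfl]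
    exact logDeriv_div s (mul_ne_zero (hpow s) hfact)
      (Finset.prod_ne_zero_iff.2 hne) hdf hdg
  rw [h1, logDeriv_mul_const s _ hfact,
    logDeriv_prod hne (fun j _ => differentiableAt_id.add_const _)]
  congr 1
  · have hd : HasDerivAt (fun z : ℂ => (n:ℂ) ^ z) ((n:ℂ) ^ s * Complex.log n) s := by
      simpa using (hasDerivAt_id s).const_cpow (Or.inl hnn)
    rw [logDeriv_apply, hd.deriv, mul_comm, mul_div_assoc, div_self (hpow s), mul_one,
      show ((n:ℂ)) = ((n:ℝ):ℂ) by push_cast; rfl, Complex.ofReal_log (Nat.cast_nonneg n)]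
  · refine Finset.sum_congr rfl (fun j hj => ?_)
    rw [logDeriv_apply]
    have : HasDerivAt (fun z : ℂ => z + (j:ℂ)) 1 s := (hasDerivAt_id s).add_const _
    rw [this.deriv, one_div]

end DigammaAux

namespace DigammaAux

lemma digamma_limit {s : ℂ} (h1 : 1/4 < s.re) (h2 : s.re < 3/4) :
    Filter.Tendsto (fun n : ℕ => (Real.log n : ℂ) - ∑ j ∈ Finset.range (n+1), (s + (j:ℂ))⁻¹)
      atTop (𝓝 (logDeriv Complex.Gamma s)) := by
  have hs : 0 < s.re := lt_trans (by norm_num) h1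
  have hopen : IsOpen {z : ℂ | 1/4 < z.re ∧ z.re < 3/4} :=
    (isOpen_lt continuous_const Complex.continuous_re).inter
      (isOpen_lt Complex.continuous_re continuous_const)
  have hmem : s ∈ {z : ℂ | 1/4 < z.re ∧ z.re < 3/4} := ⟨h1, h2⟩
  have hdiff : ∀ᶠ n : ℕ in atTop,
      DifferentiableOn ℂ (fun z : ℂ => Complex.GammaSeq z n) {z : ℂ | 1/4 < z.re ∧ z.re < 3/4} := by
    filter_upwards [Filter.eventually_ge_atTop 1] with n hn
    intro z hz
    have hz' : 0 < z.re := lt_trans (by norm_num) hz.1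
    refine DifferentiableAt.differentiableWithinAt ?_
    refine DifferentiableAt.div ?_
      (DifferentiableAt.fun_finsetProd (fun j _ => differentiableAt_id.add_const _))
      (Finset.prod_ne_zero_iff.2 (prod_ne_zero hz'))
    exact (differentiableAt_id.const_cpow (Or.inl (Nat.cast_ne_zero.2 (by omega)))).mul_const _
  have hlim := Complex.logDeriv_tendsto (f := fun (n : ℕ) (z : ℂ) => Complex.GammaSeq z n)
    (g := Complex.Gamma) hopen hmem gammaSeq_unif.tendstoLocallyUniformlyOn hdiff
    (Complex.Gamma_ne_zero_of_re_pos hs)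
  refine Filter.Tendsto.congr' ?_ hlim
  filter_upwards [Filter.eventually_ge_atTop 1] with n hn
  exact logDeriv_gammaSeq (by omega) hs

end DigammaAux

namespace DigammaAux

lemma sum_Ico_tele (f : ℕ → ℝ) {N n : ℕ} (h : N ≤ n) :
    ∑ j ∈ Finset.Ico N n, (f j - f (j+1)) = f N - f n := by
  induction n, h using Nat.le_induction with
  | base => simp
  | succ n hn ih => rw [Finset.sum_Ico_succ_top hn, ih]; ring

lemma sum_inv_sq_le {N n : ℕ} (hN : 1 ≤ N) (h : N ≤ n) :
    ∑ j ∈ Finset.Ico N n, (1:ℝ)/(((j:ℝ)+1)^2) ≤ 1/(N:ℝ) := by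
  have hle : ∑ j ∈ Finset.Ico N n, (1:ℝ)/(((j:ℝ)+1)^2)
      ≤ ∑ j ∈ Finset.Ico N n, ((1:ℝ)/j - 1/((j:ℝ)+1)) := by
    refine Finset.sum_le_sum (fun j hj => ?_)
    have hj1 : 1 ≤ j := le_trans hN (Finset.mem_Ico.1 hj).1
    have hj' : (1:ℝ) ≤ (j:ℝ) := by exact_mod_cast hj1
    have hjpos : (0:ℝ) < j := by linarith
    rw [div_sub_div _ _ (ne_of_gt hjpos) (by positivity : ((j:ℝ)+1) ≠ 0)]
    have : (1:ℝ) * (j+1) - j * 1 = 1 := by ring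
    rw [this]
    apply one_div_le_one_div_of_le (by positivity)
    nlinarith
  have htel := sum_Ico_tele (fun j => (1:ℝ)/j) h
  push_cast at htel
  rw [htel] at hle
  have hn0 : (0:ℝ) < n := by
    have : (1:ℕ) ≤ n := le_trans hN h
    exact_mod_cast Nat.lt_of_lt_of_le Nat.zero_lt_one this
  have : (1:ℝ)/n ≥ 0 := by positivity
  linarith

lemma harmonic_cast (n : ℕ) :
    ((harmonic n : ℝ) : ℂ) = ∑ j ∈ Finset.range n, (((j:ℂ) + 1))⁻¹ := by
  rw [harmonic]
  push_cast
  rfl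

lemma abs_log_sub_harmonic {n : ℕ} (hn : 1 ≤ n) :
    |Real.log n - (harmonic n : ℝ)| ≤ 1 := by
  have h1 : Real.log (n+1) ≤ (harmonic n : ℝ) := by
    have := log_add_one_le_harmonic n
    simpa using this
  have h2 : (harmonic n : ℝ) ≤ 1 + Real.log n := harmonic_le_one_add_log n
  have h3 : Real.log n ≤ Real.log (n+1) := by
    apply Real.log_le_log (by exact_mod_cast hn)
    linarith
  rw [abs_le]
  constructor <;> linarith

end DigammaAux

namespace DigammaAux

lemma finite_bound {r : ℝ} (hr : 2 ≤ r) {n : ℕ} (hn : ⌈r⌉₊ ≤ n) :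
    ‖(Real.log n : ℂ) - ∑ j ∈ Finset.range (n+1), ((1/2 + Complex.I * (r:ℂ)) + (j:ℂ))⁻¹
      - (Real.log r : ℂ)‖ ≤ 10 := by
  set s : ℂ := 1/2 + Complex.I * (r:ℂ) with hs_def
  set N : ℕ := ⌈r⌉₊ with hN_def
  set g : ℕ → ℂ := fun j => (s + (j:ℂ) + 1)⁻¹ with hg_def
  set e : ℕ → ℂ := fun j => ((j:ℂ) + 1)⁻¹ with he_def
  have hr0 : (0:ℝ) < r := by linarith
  have hsre : s.re = 1/2 := by simp [hs_def]
  have hsim : s.im = r := by simp [hs_def]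
  have hNr : r ≤ (N:ℝ) := Nat.le_ceil r
  have hNr2 : (N:ℝ) ≤ r + 1 := le_of_lt (Nat.ceil_lt_add_one hr0.le)
  have hN1 : 1 ≤ N := by
    have : (0:ℝ) < (N:ℝ) := lt_of_lt_of_le hr0 hNr
    exact_mod_cast this
  have hn1 : 1 ≤ n := le_trans hN1 hn
  -- abs facts
  have habs_s_ge : r ≤ ‖s‖ := by
    have h := Complex.abs_im_le_norm s
    rwa [hsim, abs_of_pos hr0] at h
  have habs_s_le : ‖s‖ ≤ r + 1 := by
    have h := Complex.norm_le_abs_re_add_abs_im s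
    rw [hsre, hsim, abs_of_pos hr0] at h
    have : |(1:ℝ)/2| = 1/2 := by norm_num
    rw [this] at h
    linarith
  have him : ∀ j : ℕ, (s + (j:ℂ) + 1).im = r := by
    intro j; simp [hs_def]
  have hre : ∀ j : ℕ, (s + (j:ℂ) + 1).re = 1/2 + j + 1 := by
    intro j; simp [hs_def]
  have habs_ge_r : ∀ j : ℕ, r ≤ ‖s + (j:ℂ) + 1‖ := by
    intro j
    have h := Complex.abs_im_le_norm (s + (j:ℂ) + 1)
    rwa [him j, abs_of_pos hr0] at h
  have habs_ge_j : ∀ j : ℕ, (j:ℝ) + 1 ≤ ‖s + (j:ℂ) + 1‖ := by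
    intro j
    have h := Complex.abs_re_le_norm (s + (j:ℂ) + 1)
    rw [hre j] at h
    have hj : (0:ℝ) ≤ (j:ℝ) := Nat.cast_nonneg j
    have : |(1:ℝ)/2 + j + 1| = 1/2 + j + 1 := abs_of_pos (by linarith)
    rw [this] at h
    linarith
  have hne_g : ∀ j : ℕ, s + (j:ℂ) + 1 ≠ 0 := by
    intro j h0
    have := him j
    rw [h0] at this
    simp at this
    linarith
  have hs_ne : s ≠ 0 := by
    intro h0
    have : s.im = 0 := by rw [h0]; simp
    rw [hsim] at this; linarith
  -- decomposition
  have hsum_succ : (∑ j ∈ Finset.range (n+1), (s + (j:ℂ))⁻¹)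
      = s⁻¹ + ∑ j ∈ Finset.range n, g j := by
    rw [Finset.sum_range_succ' (fun j => (s + (j:ℂ))⁻¹) n]
    simp only [Nat.cast_zero, add_zero, Nat.cast_add, Nat.cast_one]
    rw [add_comm]
    congr 1
    refine Finset.sum_congr rfl (fun j _ => ?_)
    rw [hg_def]
    congr 1
    ring
  have hE : ((Real.log n : ℂ) - ∑ j ∈ Finset.range (n+1), (s + (j:ℂ))⁻¹ - (Real.log r : ℂ))
      = ((Real.log n : ℂ) - ((harmonic n : ℝ):ℂ)) + (((harmonic N : ℝ):ℂ) - (Real.log r : ℂ))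
        - (∑ j ∈ Finset.range N, g j) - s⁻¹ + (∑ j ∈ Finset.Ico N n, (e j - g j)) := by
    rw [hsum_succ, harmonic_cast n, harmonic_cast N, Finset.sum_sub_distrib,
      ← Finset.sum_range_add_sum_Ico g hn, ← Finset.sum_range_add_sum_Ico e hn]
    simp only [he_def]
    ring
  rw [hE]
  -- bounds
  have hA : ‖(Real.log n : ℂ) - ((harmonic n : ℝ):ℂ)‖ ≤ 1 := by
    rw [show (Real.log n : ℂ) - ((harmonic n : ℝ):ℂ) = ((Real.log n - (harmonic n : ℝ) : ℝ) : ℂ)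
      by push_cast; ring]
    rw [Complex.norm_real]
    exact abs_log_sub_harmonic hn1
  have hB : ‖((harmonic N : ℝ):ℂ) - (Real.log r : ℂ)‖ ≤ 2 := by
    rw [show ((harmonic N : ℝ):ℂ) - (Real.log r : ℂ) = (((harmonic N : ℝ) - Real.log r : ℝ) : ℂ)
      by push_cast; ring]
    rw [Complex.norm_real]
    have hup : (harmonic N : ℝ) ≤ 1 + Real.log r + 1 := by
      have h1 : (harmonic N : ℝ) ≤ 1 + Real.log N := harmonic_le_one_add_log N
      have h2 : Real.log N ≤ Real.log (2*r) := by
        apply Real.log_le_log (by positivity)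
        linarith
      have h3 : Real.log (2*r) = Real.log 2 + Real.log r := Real.log_mul (by norm_num) (ne_of_gt hr0)
      have h4 : Real.log 2 ≤ 1 := by
        have := Real.log_le_sub_one_of_pos (by norm_num : (0:ℝ) < 2)
        linarith
      linarith
    have hdn : Real.log r ≤ (harmonic N : ℝ) := by
      have h1 : Real.log ((N:ℝ)+1) ≤ (harmonic N : ℝ) := by
        have := log_add_one_le_harmonic N
        push_cast at this ⊢
        linarith
      have h2 : Real.log r ≤ Real.log ((N:ℝ)+1) := by
        apply Real.log_le_log hr0
        linarith
      linarith
    rw [Real.norm_eq_abs, abs_le]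
    constructor <;> linarith
  have hC : ‖∑ j ∈ Finset.range N, g j‖ ≤ 3/2 := by
    have h1 : ‖∑ j ∈ Finset.range N, g j‖ ≤ ∑ _j ∈ Finset.range N, r⁻¹ := by
      refine le_trans (norm_sum_le _ _) (Finset.sum_le_sum (fun j _ => ?_))
      rw [hg_def]
      simp only [norm_inv]
      exact inv_anti₀ hr0 (habs_ge_r j)
    rw [Finset.sum_const, Finset.card_range, nsmul_eq_mul] at h1
    have h2 : (N:ℝ) * r⁻¹ ≤ (r+1) * r⁻¹ := by
      apply mul_le_mul_of_nonneg_right hNr2 (by positivity)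
    have h3 : (r+1) * r⁻¹ ≤ 3/2 := by
      rw [mul_inv_le_iff₀ hr0]
      linarith
    linarith
  have hD : ‖s⁻¹‖ ≤ 1/2 := by
    simp only [norm_inv]
    have h1 : ‖s‖⁻¹ ≤ r⁻¹ := inv_anti₀ hr0 habs_s_ge
    have h2 : r⁻¹ ≤ (2:ℝ)⁻¹ := inv_anti₀ (by norm_num) hr
    norm_num at h2
    linarith
  have hF : ‖∑ j ∈ Finset.Ico N n, (e j - g j)‖ ≤ 3/2 := by
    have hterm : ∀ j ∈ Finset.Ico N n, ‖e j - g j‖ ≤ (r+1) * (1/(((j:ℝ)+1)^2)) := by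
      intro j _
      have hj0 : ((j:ℂ)+1) ≠ 0 := Nat.cast_add_one_ne_zero j
      have hid : e j - g j = s * (((j:ℂ)+1) * (s+(j:ℂ)+1))⁻¹ := by
        rw [he_def, hg_def]
        dsimp only
        rw [inv_sub_inv hj0 (hne_g j), show s + (j:ℂ) + 1 - ((j:ℂ) + 1) = s by ring,
          div_eq_mul_inv]
      rw [hid, norm_mul, norm_inv, norm_mul]
      have hnj : ‖((j:ℂ)+1)‖ = (j:ℝ)+1 := by
        rw [show ((j:ℂ)+1) = (((j+1:ℕ)):ℂ) by push_cast; ring, Complex.norm_natCast]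
        push_cast; ring
      rw [hnj]
      have hprod : ((j:ℝ)+1) * ((j:ℝ)+1) ≤ ((j:ℝ)+1) * ‖s+(j:ℂ)+1‖ := by
        apply mul_le_mul_of_nonneg_left _ (by positivity)
        exact habs_ge_j j
      have hinv : (((j:ℝ)+1) * ‖s+(j:ℂ)+1‖)⁻¹ ≤ (((j:ℝ)+1) * ((j:ℝ)+1))⁻¹ := by
        apply inv_anti₀ (by positivity) hprod
      have hns : ‖s‖ ≤ r + 1 := by exact habs_s_le
      calc ‖s‖ * (((j:ℝ)+1) * ‖s+(j:ℂ)+1‖)⁻¹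
          ≤ (r+1) * (((j:ℝ)+1) * ((j:ℝ)+1))⁻¹ := by
            apply mul_le_mul hns hinv (by positivity) (by linarith)
        _ = (r+1) * (1/(((j:ℝ)+1)^2)) := by rw [one_div]; congr 1; congr 1; ring
    have h1 : ‖∑ j ∈ Finset.Ico N n, (e j - g j)‖
        ≤ ∑ j ∈ Finset.Ico N n, (r+1) * (1/(((j:ℝ)+1)^2)) :=
      le_trans (norm_sum_le _ _) (Finset.sum_le_sum hterm)
    rw [← Finset.mul_sum] at h1
    have h2 : (r+1) * (∑ j ∈ Finset.Ico N n, 1/(((j:ℝ)+1)^2)) ≤ (r+1) * (1/(N:ℝ)) := by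
      apply mul_le_mul_of_nonneg_left (sum_inv_sq_le hN1 hn) (by linarith)
    have h3 : (r+1) * (1/(N:ℝ)) ≤ (r+1) * (1/r) := by
      apply mul_le_mul_of_nonneg_left _ (by linarith)
      rw [one_div, one_div]
      exact inv_anti₀ hr0 hNr
    have h4 : (r+1) * (1/r) ≤ 3/2 := by
      rw [mul_one_div, div_le_iff₀ hr0]
      linarith
    linarith
  calc ‖((Real.log n : ℂ) - ((harmonic n : ℝ):ℂ)) + (((harmonic N : ℝ):ℂ) - (Real.log r : ℂ))
        - (∑ j ∈ Finset.range N, g j) - s⁻¹ + (∑ j ∈ Finset.Ico N n, (e j - g j))‖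
      ≤ ‖((Real.log n : ℂ) - ((harmonic n : ℝ):ℂ)) + (((harmonic N : ℝ):ℂ) - (Real.log r : ℂ))
        - (∑ j ∈ Finset.range N, g j) - s⁻¹‖ + ‖∑ j ∈ Finset.Ico N n, (e j - g j)‖ :=
        norm_add_le _ _
    _ ≤ (‖((Real.log n : ℂ) - ((harmonic n : ℝ):ℂ)) + (((harmonic N : ℝ):ℂ) - (Real.log r : ℂ))
        - (∑ j ∈ Finset.range N, g j)‖ + ‖s⁻¹‖) + ‖∑ j ∈ Finset.Ico N n, (e j - g j)‖ := by
        gcongr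
        exact norm_sub_le _ _
    _ ≤ ((‖((Real.log n : ℂ) - ((harmonic n : ℝ):ℂ)) + (((harmonic N : ℝ):ℂ) - (Real.log r : ℂ))‖
        + ‖∑ j ∈ Finset.range N, g j‖) + ‖s⁻¹‖) + ‖∑ j ∈ Finset.Ico N n, (e j - g j)‖ := by
        gcongr
        exact norm_sub_le _ _
    _ ≤ (((‖(Real.log n : ℂ) - ((harmonic n : ℝ):ℂ)‖ + ‖((harmonic N : ℝ):ℂ) - (Real.log r : ℂ)‖)
        + ‖∑ j ∈ Finset.range N, g j‖) + ‖s⁻¹‖) + ‖∑ j ∈ Finset.Ico N n, (e j - g j)‖ := by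
        gcongr
        exact norm_add_le _ _
    _ ≤ 10 := by linarith

end DigammaAux


theorem logDeriv_gamma_half_line :
    ∃ C > (0 : ℝ), ∀ r : ℝ, 2 ≤ r →
      ‖logDeriv Complex.Gamma (1 / 2 + Complex.I * (r : ℂ)) -
          (Real.log r : ℂ)‖ ≤ C := by
  refine ⟨10, by norm_num, fun r hr => ?_⟩
  have hre : (1 / 2 + Complex.I * (r : ℂ)).re = 1/2 := by simp
  have h1 : (1:ℝ)/4 < (1 / 2 + Complex.I * (r : ℂ)).re := by rw [hre]; norm_num
  have h2 : (1 / 2 + Complex.I * (r : ℂ)).re < 3/4 := by rw [hre]; norm_num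
  have hlim := DigammaAux.digamma_limit h1 h2
  have hlim2 : Filter.Tendsto (fun n : ℕ =>
      ‖(Real.log n : ℂ) - ∑ j ∈ Finset.range (n+1), ((1 / 2 + Complex.I * (r : ℂ)) + (j:ℂ))⁻¹
        - (Real.log r : ℂ)‖) atTop
      (𝓝 ‖logDeriv Complex.Gamma (1 / 2 + Complex.I * (r : ℂ)) - (Real.log r : ℂ)‖) :=
    (hlim.sub tendsto_const_nhds).norm
  refine le_of_tendsto hlim2 ?_
  filter_upwards [Filter.eventually_ge_atTop ⌈r⌉₊] with n hn
  exact DigammaAux.finite_bound hr hn
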